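/- arXiv:1303.0957 — 3 statements merged into one kernel-verified Lean document; each statement's English description precedes it below -/
import Mathlib

section
/- There is no constant c > 0 such that ‖u‖_∞² ≤ ‖u‖‖u'‖ − c‖u‖² holds for all u ∈ H¹₀(0,L): the optimal additive correction constant in this inequality is zero. -/
open Real MeasureTheory intervalIntegral

/-- `u ∈ H¹₀(0,L)`: absolutely continuous `u(x) = ∫₀ˣ v(t) dt` with `u(L) = 0` and
square integrable derivative `v`. -/
def H10mem (L : ℝ) (u v : ℝ → ℝ) : Prop :=
  (∀ x : ℝ, u x = ∫ t in (0:ℝ)..x, v t) ∧ u L = 0 ∧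
  (∀ a b : ℝ, IntervalIntegrable v volume a b) ∧
  IntervalIntegrable (fun x => (v x) ^ 2) volume 0 L


lemma contAux (p q : ℝ) : Continuous (fun x : ℝ => Real.cosh (p*x + q)) := by
  exact Real.continuous_cosh.comp ((continuous_const.mul continuous_id).add continuous_const)

lemma integral_cosh_comp (p q a b : ℝ) :
    ∫ x in a..b, p * Real.cosh (p*x + q) = Real.sinh (p*b+q) - Real.sinh (p*a+q) := by
  apply intervalIntegral.integral_eq_sub_of_hasDerivAt (f := fun x => Real.sinh (p*x+q))
  · intro x _
    have h : HasDerivAt (fun x : ℝ => p*x+q) p x := by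
      simpa using ((hasDerivAt_id x).const_mul p).add_const q
    simpa [mul_comm, Function.comp_def] using (Real.hasDerivAt_sinh (p*x+q)).comp x h
  · exact (continuous_const.mul (contAux p q)).intervalIntegrable a b

lemma integral_cosh_sq (p q a b : ℝ) (hp : p ≠ 0) :
    ∫ x in a..b, Real.cosh (p*x+q)^2
      = (Real.sinh (2*p*b+2*q) - Real.sinh (2*p*a+2*q))/(4*p) + (b-a)/2 := by
  have key : ∀ x : ℝ, Real.cosh (p*x+q)^2
      = (1/(4*p)) * ((2*p) * Real.cosh ((2*p)*x + 2*q)) + 1/2 := by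
    intro x
    have h2 := Real.cosh_two_mul (p*x+q)
    have he : (2:ℝ)*(p*x+q) = (2*p)*x + 2*q := by ring
    rw [he, Real.sinh_sq] at h2
    rw [h2]
    field_simp
    ring
  simp_rw [key]
  rw [intervalIntegral.integral_add (f := fun x => 1/(4*p) * ((2*p) * Real.cosh ((2*p)*x + 2*q)))
      (g := fun _ => (1/2:ℝ)) ((continuous_const.mul
        (continuous_const.mul (contAux (2*p) (2*q)))).intervalIntegrable a b)
      (intervalIntegrable_const), intervalIntegral.integral_const_mul,
      integral_cosh_comp, intervalIntegral.integral_const]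
  field_simp
  rw [smul_eq_mul]; ring

lemma integral_sinh_sq (p q a b : ℝ) (hp : p ≠ 0) :
    ∫ x in a..b, Real.sinh (p*x+q)^2
      = (Real.sinh (2*p*b+2*q) - Real.sinh (2*p*a+2*q))/(4*p) - (b-a)/2 := by
  have key : ∀ x : ℝ, Real.sinh (p*x+q)^2 = Real.cosh (p*x+q)^2 - 1 :=
    fun x => Real.sinh_sq _
  simp_rw [key]
  rw [intervalIntegral.integral_sub (f := fun x => Real.cosh (p*x+q)^2) (g := fun _ => (1:ℝ))
      (((contAux p q).pow 2).intervalIntegrable a b)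
      intervalIntegrable_const, integral_cosh_sq p q a b hp,
      intervalIntegral.integral_const]
  simp
  ring

noncomputable def vv (L k : ℝ) : ℝ → ℝ :=
  fun x => if x ≤ L/2 then k * Real.cosh (k*x + 0) else (-k) * Real.cosh ((-k)*x + k*L)

lemma vv_meas (L k : ℝ) : Measurable (vv L k) := by
  unfold vv
  exact Measurable.ite (measurableSet_le measurable_id measurable_const)
    (continuous_const.mul (contAux k 0)).measurable
    (continuous_const.mul (contAux (-k) (k*L))).measurable

lemma vv_intable (L k : ℝ) (a b : ℝ) : IntervalIntegrable (vv L k) volume a b := by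
  set M := |a| + |b| + |L| with hM
  rw [intervalIntegrable_iff]
  apply MeasureTheory.Integrable.mono'
    (g := fun _ => |k| * Real.cosh (|k| * M))
    (integrableOn_const measure_Ioc_lt_top.ne)
    ((vv_meas L k).aestronglyMeasurable)
  filter_upwards [MeasureTheory.ae_restrict_mem measurableSet_uIoc] with x hx
  have hxa : |x| ≤ |a| + |b| := by
    rcases hx with ⟨h1, h2⟩
    rw [abs_le]
    constructor
    · have : -(|a| + |b|) ≤ min a b := le_min (by
        have := neg_abs_le a; linarith [abs_nonneg b]) (by
        have := neg_abs_le b; linarith [abs_nonneg a])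
      linarith [h1.le]
    · have : max a b ≤ |a| + |b| :=
        max_le (by linarith [le_abs_self a, abs_nonneg b])
          (by linarith [le_abs_self b, abs_nonneg a])
      linarith
  have key : ∀ z : ℝ, |z| ≤ |k| * M → Real.cosh z ≤ Real.cosh (|k| * M) := by
    intro z hz
    rw [Real.cosh_le_cosh]
    rwa [abs_of_nonneg (by positivity : (0:ℝ) ≤ |k| * M)]
  unfold vv
  split_ifs with h
  · rw [norm_mul, Real.norm_eq_abs, Real.norm_eq_abs, abs_of_pos (Real.cosh_pos _)]
    apply mul_le_mul_of_nonneg_left _ (abs_nonneg k)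
    apply key
    rw [add_zero, abs_mul]
    apply mul_le_mul_of_nonneg_left _ (abs_nonneg k)
    have := abs_nonneg L
    linarith
  · rw [norm_mul, Real.norm_eq_abs, Real.norm_eq_abs, abs_of_pos (Real.cosh_pos _), abs_neg]
    apply mul_le_mul_of_nonneg_left _ (abs_nonneg k)
    apply key
    have e : (-k)*x + k*L = k*(L - x) := by ring
    rw [e, abs_mul]
    apply mul_le_mul_of_nonneg_left _ (abs_nonneg k)
    have h1 : |L - x| ≤ |L| + |x| := abs_sub _ _
    linarith

lemma IntervalIntegrable.congr' {f g : ℝ → ℝ} {a b : ℝ}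
    (h : IntervalIntegrable g volume a b) (he : Set.EqOn f g (Set.uIcc a b)) :
    IntervalIntegrable f volume a b := by
  rw [intervalIntegrable_iff] at h ⊢
  exact (h.congr_fun (fun x hx => (he (Set.uIoc_subset_uIcc hx)).symm) measurableSet_uIoc)

set_option maxHeartbeats 2000000 in
/-- There is no constant `c > 0` such that `‖u‖_∞² ≤ ‖u‖‖u'‖ − c‖u‖²` for all
`u ∈ H¹₀(0,L)`: the optimal additive correction constant is zero. -/
theorem no_additive_correction_on_interval (L : ℝ) (hL : 0 < L) :
    ¬ ∃ c : ℝ, 0 < c ∧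
      ∀ u v : ℝ → ℝ, H10mem L u v → ∀ ξ ∈ Set.Icc (0:ℝ) L,
        (u ξ) ^ 2 ≤
          Real.sqrt (∫ x in (0:ℝ)..L, (u x) ^ 2) *
              Real.sqrt (∫ x in (0:ℝ)..L, (v x) ^ 2) -
            c * (∫ x in (0:ℝ)..L, (u x) ^ 2) := by
  rintro ⟨c, hc, H⟩
  obtain ⟨k, hkdef⟩ : ∃ k : ℝ, k = 8/(c*L^2) + 4/L := ⟨_, rfl⟩
  have hk : 0 < k := by rw [hkdef]; positivity
  have hkL : k*c*L^2 = 8 + 4*c*L := by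
    rw [hkdef]; field_simp
  set v : ℝ → ℝ := vv L k with hv
  set u : ℝ → ℝ := (fun x => ∫ t in (0:ℝ)..x, v t) with hu
  have hL2 : (0:ℝ) ≤ L/2 := by linarith
  have hL2' : L/2 ≤ L := by linarith
  -- u on [0, L/2]
  have hu1 : ∀ x : ℝ, 0 ≤ x → x ≤ L/2 → u x = Real.sinh (k*x) := by
    intro x hx0 hx
    show (∫ t in (0:ℝ)..x, v t) = Real.sinh (k*x)
    rw [intervalIntegral.integral_congr
        (g := fun t => k * Real.cosh (k*t + 0)) (by
      intro t ht
      rw [Set.uIcc_of_le hx0] at ht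
      simp only [hv, vv, if_pos (le_trans ht.2 hx)])]
    rw [integral_cosh_comp]
    simp
  -- integral of v on [L/2, x]
  have hint2 : ∀ x : ℝ, L/2 ≤ x →
      (∫ t in (L/2 : ℝ)..x, v t) = Real.sinh (k*(L-x)) - Real.sinh (k*(L/2)) := by
    intro x hx
    rw [intervalIntegral.integral_congr_ae
        (g := fun t => (-k) * Real.cosh ((-k)*t + k*L)) (by
      apply Filter.Eventually.of_forall
      intro t ht
      rw [Set.uIoc_of_le hx] at ht
      simp only [hv, vv, if_neg (not_le.2 ht.1)])]
    rw [integral_cosh_comp]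
    rw [show (-k)*x + k*L = k*(L-x) by ring, show (-k)*(L/2) + k*L = k*(L/2) by ring]
  -- u on [L/2, L]
  have hu2 : ∀ x : ℝ, L/2 ≤ x → u x = Real.sinh (k*(L-x)) := by
    intro x hx
    have hadd := intervalIntegral.integral_add_adjacent_intervals
      (vv_intable L k 0 (L/2)) (vv_intable L k (L/2) x)
    show (∫ t in (0:ℝ)..x, v t) = Real.sinh (k*(L-x))
    rw [← hadd, hint2 x hx]
    have := hu1 (L/2) hL2 le_rfl
    rw [show (∫ t in (0:ℝ)..(L/2:ℝ), v t) = u (L/2) from rfl, this]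
    ring
  -- membership
  have huL : u L = 0 := by
    rw [hu2 L hL2']
    simp
  have hv2a : IntervalIntegrable (fun x => v x ^ 2) volume 0 (L/2) := by
    apply IntervalIntegrable.congr'
      (g := fun x => (k * Real.cosh (k*x + 0))^2)
      (((continuous_const.mul (contAux k 0)).pow 2).intervalIntegrable _ _)
    intro x hx
    rw [Set.uIcc_of_le hL2] at hx
    show v x ^ 2 = (k * Real.cosh (k*x + 0))^2
    simp only [hv, vv, if_pos hx.2]
  have hv2b : IntervalIntegrable (fun x => v x ^ 2) volume (L/2) L := by
    apply IntervalIntegrable.congr'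
      (g := fun x => ((-k) * Real.cosh ((-k)*x + k*L))^2)
      (((continuous_const.mul (contAux (-k) (k*L))).pow 2).intervalIntegrable _ _)
    intro x hx
    rw [Set.uIcc_of_le hL2'] at hx
    show v x ^ 2 = ((-k) * Real.cosh ((-k)*x + k*L))^2
    by_cases hxc : x ≤ L/2
    · have hxe : x = L/2 := le_antisymm hxc hx.1
      subst hxe
      simp only [hv, vv, if_pos le_rfl]
      rw [show (-k)*(L/2) + k*L = k*(L/2) + 0 by ring]
      ring
    · simp only [hv, vv, if_neg hxc]
  have hmem : H10mem L u v := ⟨fun x => rfl, huL, vv_intable L k, hv2a.trans hv2b⟩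
  -- the two main integrals
  obtain ⟨A, hAdef⟩ : ∃ A : ℝ, A = ∫ x in (0:ℝ)..L, (u x)^2 := ⟨_, rfl⟩
  obtain ⟨B, hBdef⟩ : ∃ B : ℝ, B = ∫ x in (0:ℝ)..L, (v x)^2 := ⟨_, rfl⟩
  have hA : A = Real.sinh (k*L)/(2*k) - L/2 := by
    have p1 : (∫ x in (0:ℝ)..(L/2), (u x)^2)
        = ∫ x in (0:ℝ)..(L/2), Real.sinh (k*x + 0)^2 := by
      apply intervalIntegral.integral_congr
      intro x hx
      rw [Set.uIcc_of_le hL2] at hx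
      show u x ^ 2 = Real.sinh (k*x + 0)^2
      rw [hu1 x hx.1 hx.2, add_zero]
    have p2 : (∫ x in (L/2:ℝ)..L, (u x)^2)
        = ∫ x in (L/2:ℝ)..L, Real.sinh ((-k)*x + k*L)^2 := by
      apply intervalIntegral.integral_congr
      intro x hx
      rw [Set.uIcc_of_le hL2'] at hx
      show u x ^ 2 = Real.sinh ((-k)*x + k*L)^2
      rw [show (-k)*x + k*L = k*(L-x) by ring, hu2 x hx.1]
    have i1 : IntervalIntegrable (fun x => (u x)^2) volume 0 (L/2) := by
      apply IntervalIntegrable.congr' (g := fun x => Real.sinh (k*x + 0)^2)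
        (((Real.continuous_sinh.comp ((continuous_const.mul continuous_id).add
          continuous_const)).pow 2).intervalIntegrable _ _)
      intro x hx
      rw [Set.uIcc_of_le hL2] at hx
      show u x ^ 2 = Real.sinh (k*x + 0)^2
      rw [hu1 x hx.1 hx.2, add_zero]
    have i2 : IntervalIntegrable (fun x => (u x)^2) volume (L/2) L := by
      apply IntervalIntegrable.congr' (g := fun x => Real.sinh ((-k)*x + k*L)^2)
        (((Real.continuous_sinh.comp ((continuous_const.mul continuous_id).add
          continuous_const)).pow 2).intervalIntegrable _ _)
      intro x hx
      rw [Set.uIcc_of_le hL2'] at hx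
      show u x ^ 2 = Real.sinh ((-k)*x + k*L)^2
      rw [show (-k)*x + k*L = k*(L-x) by ring, hu2 x hx.1]
    rw [hAdef, ← intervalIntegral.integral_add_adjacent_intervals i1 i2, p1, p2,
      integral_sinh_sq k 0 0 (L/2) hk.ne', integral_sinh_sq (-k) (k*L) (L/2) L (by linarith)]
    rw [show 2*k*(L/2) + 2*0 = k*L by ring, show 2*k*0 + 2*0 = (0:ℝ) by ring,
      show 2*(-k)*L + 2*(k*L) = (0:ℝ) by ring, show 2*(-k)*(L/2) + 2*(k*L) = k*L by ring,
      Real.sinh_zero]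
    field_simp
    ring
  have hB : B = k * Real.sinh (k*L)/2 + k^2*L/2 := by
    have p1 : (∫ x in (0:ℝ)..(L/2), (v x)^2)
        = ∫ x in (0:ℝ)..(L/2), k^2 * Real.cosh (k*x + 0)^2 := by
      apply intervalIntegral.integral_congr
      intro x hx
      rw [Set.uIcc_of_le hL2] at hx
      show v x ^ 2 = k^2 * Real.cosh (k*x + 0)^2
      simp only [hv, vv, if_pos hx.2]
      ring
    have p2 : (∫ x in (L/2:ℝ)..L, (v x)^2)
        = ∫ x in (L/2:ℝ)..L, k^2 * Real.cosh ((-k)*x + k*L)^2 := by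
      apply intervalIntegral.integral_congr
      intro x hx
      rw [Set.uIcc_of_le hL2'] at hx
      show v x ^ 2 = k^2 * Real.cosh ((-k)*x + k*L)^2
      by_cases hxc : x ≤ L/2
      · have hxe : x = L/2 := le_antisymm hxc hx.1
        subst hxe
        simp only [hv, vv, if_pos le_rfl]
        rw [show (-k)*(L/2) + k*L = k*(L/2) + 0 by ring]
        ring
      · simp only [hv, vv, if_neg hxc]
        ring
    rw [hBdef, ← intervalIntegral.integral_add_adjacent_intervals hv2a hv2b, p1, p2,
      intervalIntegral.integral_const_mul, intervalIntegral.integral_const_mul,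
      integral_cosh_sq k 0 0 (L/2) hk.ne', integral_cosh_sq (-k) (k*L) (L/2) L (by linarith)]
    rw [show 2*k*(L/2) + 2*0 = k*L by ring, show 2*k*0 + 2*0 = (0:ℝ) by ring,
      show 2*(-k)*L + 2*(k*L) = (0:ℝ) by ring, show 2*(-k)*(L/2) + 2*(k*L) = k*L by ring,
      Real.sinh_zero]
    field_simp
    ring
  -- numeric facts
  have ht : 0 < k*L := by positivity
  have hsh0 : 0 ≤ Real.sinh (k*L) := by
    rw [← Real.sinh_zero]
    exact Real.sinh_le_sinh.2 ht.le
  have hexp : (1 + k*L/2)^2 ≤ Real.exp (k*L) := by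
    have h1 := Real.add_one_le_exp (k*L/2)
    have h2 : Real.exp (k*L/2) ^ 2 = Real.exp (k*L) := by
      rw [sq, ← Real.exp_add]; ring_nf
    have h4 : (1 + k*L/2)^2 ≤ (Real.exp (k*L/2))^2 :=
      pow_le_pow_left₀ (by linarith) (by linarith) 2
    linarith
  have hsinh_lb : (k*L + (k*L)^2/4)/2 ≤ Real.sinh (k*L) := by
    rw [Real.sinh_eq]
    have h3 : Real.exp (-(k*L)) ≤ 1 := by
      rw [← Real.exp_zero]
      exact Real.exp_le_exp.2 (by linarith)
    nlinarith
  have hcA : 1/2 ≤ c * A := by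
    have h5 : c*(k*L + (k*L)^2/4)/2 ≤ c * Real.sinh (k*L) := by
      have := mul_le_mul_of_nonneg_left hsinh_lb hc.le
      linarith
    have h6 : k*(k*c*L^2) = k*(8 + 4*c*L) := by rw [hkL]
    have h7 : k ≤ c * (Real.sinh (k*L) - k*L) := by nlinarith [h5, h6]
    have h8 : 2*k*(c*A) = c*(Real.sinh (k*L) - k*L) := by
      rw [hA]; field_simp
    nlinarith [hk, h7, h8]
  have hA0 : 0 < A := by
    have h1 : 0 < c * A := lt_of_lt_of_le (by norm_num) hcA
    rcases mul_pos_iff.1 h1 with h|h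
    · exact h.2
    · linarith [h.1]
  have hB0 : 0 ≤ B := by
    rw [hB]
    nlinarith [mul_nonneg hk.le hsh0, mul_nonneg (mul_nonneg hk.le hk.le) hL.le]
  have hAB : A * B = (Real.sinh (k*L)^2 - (k*L)^2)/4 := by
    rw [hA, hB]; field_simp; ring
  have hsqrt : Real.sqrt A * Real.sqrt B ≤ Real.sinh (k*L)/2 := by
    rw [← Real.sqrt_mul hA0.le]
    have h9 : A*B ≤ (Real.sinh (k*L)/2)^2 := by
      rw [hAB]; nlinarith [sq_nonneg (k*L)]
    calc Real.sqrt (A*B) ≤ Real.sqrt ((Real.sinh (k*L)/2)^2) := Real.sqrt_le_sqrt h9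
    _ = Real.sinh (k*L)/2 := Real.sqrt_sq (by linarith)
  -- the peak value
  have hM : u (L/2) ^ 2 = (Real.cosh (k*L) - 1)/2 := by
    rw [hu1 (L/2) hL2 le_rfl, Real.sinh_sq]
    have h10 : Real.cosh (k*L) = 2 * Real.cosh (k*(L/2))^2 - 1 := by
      rw [show k*L = 2*(k*(L/2)) by ring, Real.cosh_two_mul, Real.sinh_sq]
      ring
    rw [h10]; ring
  have key := H u v hmem (L/2) ⟨hL2, hL2'⟩
  rw [← hAdef, ← hBdef] at key
  have hcs : Real.cosh (k*L) - Real.sinh (k*L) = Real.exp (-(k*L)) := Real.cosh_sub_sinh _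
  have hep : 0 < Real.exp (-(k*L)) := Real.exp_pos _
  rw [hM] at key
  linarith
end

section
/- For every λ ≥ 1, G(λ) := (1/(2π)) · (π√λ coth(π√λ) − 1)/λ satisfies (2D − 1/2) G(D − 1/2) < D^{1/2} − 1/π for all D ≥ 1. -/
set_option maxHeartbeats 1600000

open Real

/-- With `G(λ) = (π√λ coth(π√λ) − 1)/(2πλ)`, for all `D ≥ 1`,
`(2D − 1/2) G(D − 1/2) < D^{1/2} − 1/π`. -/
theorem green_substitution_bound :
    ∀ D : ℝ, 1 ≤ D →
      (2 * D - 1 / 2) *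
          ((π * Real.sqrt (D - 1 / 2) *
              (Real.cosh (π * Real.sqrt (D - 1 / 2)) /
                Real.sinh (π * Real.sqrt (D - 1 / 2))) - 1) /
            (2 * π * (D - 1 / 2))) <
        Real.sqrt D - 1 / π := by
  intro D hD
  have hπ : (3.141592 : ℝ) < π := Real.pi_gt_d6
  have hπ' : π < 3.15 := Real.pi_lt_d2
  have hπpos : (0:ℝ) < π := by linarith
  set s : ℝ := Real.sqrt (D - 1/2) with hs_def
  have hs2 : s ^ 2 = D - 1/2 := Real.sq_sqrt (by linarith)
  have hs2ge : (1:ℝ)/2 ≤ s ^ 2 := by rw [hs2]; linarith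
  have hspos : 0 < s := Real.sqrt_pos.mpr (by linarith)
  have hslb : (0.7071 : ℝ) ≤ s := by nlinarith [hs2ge, hspos]
  set t : ℝ := Real.sqrt D with ht_def
  have ht2 : t ^ 2 = D := Real.sq_sqrt (by linarith)
  have htpos : 0 < t := Real.sqrt_pos.mpr (by linarith)
  have hts : s ≤ t := Real.sqrt_le_sqrt (by linarith)
  have ht2s : t ^ 2 = s ^ 2 + 1/2 := by rw [ht2, hs2]; ring
  set E : ℝ := Real.exp (-(2 * (π * s))) with hE_def
  have hEpos : 0 < E := Real.exp_pos _
  have hE1 : E < 1 := Real.exp_lt_one_iff.mpr (by nlinarith)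
  have h1E : (0:ℝ) < 1 - E := by linarith
  -- coth rewrite
  have hexp : Real.exp (-(π * s)) = Real.exp (π * s) * E := by
    rw [hE_def, ← Real.exp_add]; congr 1; ring
  have hcoth : Real.cosh (π * s) / Real.sinh (π * s) = (1 + E) / (1 - E) := by
    rw [Real.cosh_eq, Real.sinh_eq, hexp]
    rw [show Real.exp (π*s) + Real.exp (π*s) * E = Real.exp (π*s) * (1+E) by ring,
        show Real.exp (π*s) - Real.exp (π*s) * E = Real.exp (π*s) * (1-E) by ring]
    rw [div_div_div_eq]
    have he := Real.exp_ne_zero (π * s)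
    field_simp
  -- key bound : E ≤ 1/(243 s^4)
  have hy : (4.44:ℝ) ≤ 2 * (π * s) := by nlinarith
  have hkey : 243 * s ^ 4 * E ≤ 1 := by
    have hsum := Real.sum_le_exp_of_nonneg (show (0:ℝ) ≤ 2 * (π * s) by linarith) 7
    simp [Finset.sum_range_succ, Nat.factorial] at hsum
    set y : ℝ := 2 * (π * s) with hy_def
    have hP : (0.156:ℝ) * y ^ 4 ≤ 1 + y + y^2/2 + y^3/6 + y^4/24 + y^5/120 + y^6/720 := by
      nlinarith [pow_nonneg (show (0:ℝ) ≤ y - 4.44 by linarith) 2,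
        pow_nonneg (show (0:ℝ) ≤ y - 4.44 by linarith) 3,
        pow_nonneg (show (0:ℝ) ≤ y - 4.44 by linarith) 4,
        pow_nonneg (show (0:ℝ) ≤ y - 4.44 by linarith) 5,
        pow_nonneg (show (0:ℝ) ≤ y - 4.44 by linarith) 6]
    have hπ2 : (9.8696:ℝ) ≤ π ^ 2 := by nlinarith
    have hπ4 : (97.40:ℝ) ≤ π ^ 4 := by nlinarith
    have hy4 : y ^ 4 = 16 * π ^ 4 * s ^ 4 := by rw [hy_def]; ring
    have hs4pos : (0:ℝ) < s ^ 4 := by positivity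
    have hA : 243 * s ^ 4 ≤ 0.156 * y ^ 4 := by rw [hy4]; nlinarith
    have hB : 243 * s ^ 4 ≤ Real.exp y := by
      refine hA.trans (hP.trans ?_)
      convert hsum using 1
    have hEmul : Real.exp y * E = 1 := by
      rw [hE_def, ← Real.exp_add, hy_def]; simp
    calc 243 * s ^ 4 * E ≤ Real.exp y * E :=
          mul_le_mul_of_nonneg_right hB hEpos.le
      _ = 1 := hEmul
  have hs4 : (1:ℝ)/4 ≤ s ^ 4 := by nlinarith
  have hE11 : E ≤ 1/11 := by
    nlinarith [hkey, hEpos, mul_le_mul_of_nonneg_right hs4 hEpos.le]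
  have hcu : (1 + E) / (1 - E) ≤ 1 + 11/5 * E := by
    rw [div_le_iff₀ h1E]; nlinarith [hE11, hEpos]
  -- rewrite the goal
  rw [hcoth]
  have e0 : D - 1/2 = s ^ 2 := hs2.symm
  have e1 : 2 * D - 1/2 = 2 * s ^ 2 + 1/2 := by linarith [hs2]
  rw [e0, e1]
  have hden : (0:ℝ) < 2 * π * s ^ 2 := by positivity
  have step1 : (2 * s ^ 2 + 1/2) * ((π * s * ((1 + E)/(1 - E)) - 1) / (2 * π * s ^ 2)) ≤
      (2 * s ^ 2 + 1/2) * ((π * s * (1 + 11/5 * E) - 1) / (2 * π * s ^ 2)) := by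
    gcongr
  refine lt_of_le_of_lt step1 ?_
  rw [mul_div_assoc', div_lt_iff₀ hden]
  have hR : (t - 1/π) * (2 * π * s ^ 2) = 2 * π * s ^ 2 * t - 2 * s ^ 2 := by
    field_simp
  rw [hR]
  have hab : (0:ℝ) < 32 * s ^ 3 * t + (32 * s ^ 4 + 8 * s ^ 2 - 1) := by
    nlinarith [mul_pos (mul_pos (mul_pos hspos hspos) hspos) htpos, hs2ge]
  have ht26 : s ^ 6 * t ^ 2 = s ^ 6 * (s ^ 2 + 1/2) := by rw [ht2s]
  have htlb : 32 * s ^ 4 + 8 * s ^ 2 - 1 ≤ 32 * s ^ 3 * t := by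
    nlinarith [ht26, hab, hs2ge]
  have htlbπ : 32 * π * s ^ 4 + 8 * π * s ^ 2 - π ≤ 32 * π * s ^ 3 * t := by
    nlinarith [htlb, hπpos]
  have hs4E : s ^ 4 * E ≤ 1/243 := by nlinarith [hkey]
  have hs2E : s ^ 2 * E ≤ 2/243 := by
    nlinarith [hs4E, mul_nonneg (mul_nonneg (show (0:ℝ) ≤ 2 * s ^ 2 - 1 by linarith)
      (sq_nonneg s)) hEpos.le]
  have h1 : π * (s ^ 4 * E) ≤ 3.15 * (1/243) :=
    mul_le_mul hπ'.le hs4E (by positivity) (by norm_num)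
  have h2 : π * (s ^ 2 * E) ≤ 3.15 * (2/243) :=
    mul_le_mul hπ'.le hs2E (by positivity) (by norm_num)
  have hA2 : 352/5 * π * s ^ 4 * E + 88/5 * π * s ^ 2 * E + π < 8 * s := by
    nlinarith [h1, h2, hπ', hslb]
  nlinarith [htlbπ, hA2, hspos]
end

section
/- Define G(λ) = (1/(2π²))[(√(λ−1)/λ)(π/2)coth(π√(λ−1)) − (λ−1)/λ² + 1/(4λ)] for λ > 1. Then for all D ≥ √3, 2D·G(D) ≤ (1/(2π))√D − 3/(4π²). -/
open Real

lemma exp_sub_one_ge_pow4 {x : ℝ} (hx : 0 ≤ x) : x ^ 4 / 24 ≤ Real.exp x - 1 := by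
  have h := Real.sum_le_exp_of_nonneg hx 5
  have hs : ∑ i ∈ Finset.range 5, x ^ i / i.factorial =
      1 + x + x ^ 2 / 2 + x ^ 3 / 6 + x ^ 4 / 24 := by
    norm_num [Finset.sum_range_succ, Nat.factorial]
  rw [hs] at h
  nlinarith [pow_nonneg hx 2, pow_nonneg hx 3]

lemma poly_ineq {t : ℝ} (h : (0.855 : ℝ) ≤ t) :
    (3 * (t ^ 2 + 1) + 62.014 * t ^ 3) * (2 * t + 1 / (2 * t)) ≤
      97.39 * (t ^ 3 * (t ^ 2 + 1)) := by
  have ht : (0:ℝ) < t := by linarith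
  have h1 : 2 * t + 1 / (2 * t) = (4 * t ^ 2 + 1) / (2 * t) := by field_simp; ring
  rw [h1, ← mul_div_assoc, div_le_iff₀ (by positivity : (0:ℝ) < 2 * t)]
  nlinarith [mul_nonneg (mul_nonneg (sub_nonneg.mpr h) (sub_nonneg.mpr h)) (pow_nonneg ht.le 4),
    mul_nonneg (sub_nonneg.mpr h) (pow_nonneg ht.le 5),
    mul_nonneg (sub_nonneg.mpr h) (pow_nonneg ht.le 4),
    mul_nonneg (sub_nonneg.mpr h) (pow_nonneg ht.le 3),
    mul_nonneg (sub_nonneg.mpr h) (pow_nonneg ht.le 2),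
    mul_nonneg (sub_nonneg.mpr h) ht.le, sq_nonneg (t - 1), pow_pos ht 6]

lemma core_ineq {a t : ℝ} (ht : 0 < t) (ha : 0 < a) (h1 : a ^ 2 = t ^ 2 + 1)
    (h2 : (0.732 : ℝ) ≤ t ^ 2) :
    t + 3 / (π ^ 4 * t ^ 3) + 2 / (π * a ^ 2) ≤ a := by
  have hπ : (3.1415 : ℝ) < π := by have := Real.pi_gt_d6; linarith
  have hπ' : π < 3.1416 := by have := Real.pi_lt_d6; linarith
  have hπp : (0 : ℝ) < π := by linarith
  have hat : a - t = 1 / (a + t) := by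
    rw [eq_div_iff (by positivity)]; nlinarith
  have ht855 : (0.855 : ℝ) ≤ t := by nlinarith
  have hπ2l : (9.869 : ℝ) ≤ π ^ 2 := by nlinarith
  have hπ2u : π ^ 2 ≤ (9.8697 : ℝ) := by nlinarith
  have hp3 : π ^ 3 ≤ 31.007 := by nlinarith
  have hp4 : (97.39 : ℝ) ≤ π ^ 4 := by nlinarith
  have hsum : 3 / (π ^ 4 * t ^ 3) + 2 / (π * a ^ 2)
      = (3 * a ^ 2 + 2 * π ^ 3 * t ^ 3) / (π ^ 4 * t ^ 3 * a ^ 2) := by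
    field_simp
  have haux : a + t ≤ 2 * t + 1 / (2 * t) := by
    have hu : (0:ℝ) < t + 1 / (2 * t) := by positivity
    have hsq : a ^ 2 ≤ (t + 1 / (2 * t)) ^ 2 := by
      have hexp : (t + 1 / (2 * t)) ^ 2 = t ^ 2 + 1 + (1 / (2 * t)) ^ 2 := by
        field_simp; ring
      rw [h1, hexp]
      nlinarith [sq_nonneg (1 / (2 * t))]
    nlinarith [sq_nonneg (a - (t + 1 / (2 * t)))]
  have key : (3 * a ^ 2 + 2 * π ^ 3 * t ^ 3) / (π ^ 4 * t ^ 3 * a ^ 2) ≤ 1 / (a + t) := by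
    rw [div_le_div_iff₀ (by positivity) (by positivity), one_mul]
    calc (3 * a ^ 2 + 2 * π ^ 3 * t ^ 3) * (a + t)
        ≤ (3 * a ^ 2 + 62.014 * t ^ 3) * (a + t) := by
          apply mul_le_mul_of_nonneg_right _ (by positivity)
          nlinarith [pow_pos ht 3]
      _ ≤ (3 * a ^ 2 + 62.014 * t ^ 3) * (2 * t + 1 / (2 * t)) := by
          apply mul_le_mul_of_nonneg_left haux (by positivity)
      _ = (3 * (t ^ 2 + 1) + 62.014 * t ^ 3) * (2 * t + 1 / (2 * t)) := by rw [h1]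
      _ ≤ 97.39 * (t ^ 3 * (t ^ 2 + 1)) := poly_ineq ht855
      _ = 97.39 * (t ^ 3 * a ^ 2) := by rw [h1]
      _ ≤ π ^ 4 * (t ^ 3 * a ^ 2) := by
          apply mul_le_mul_of_nonneg_right hp4 (by positivity)
      _ = π ^ 4 * t ^ 3 * a ^ 2 := by ring
  have := le_trans (le_of_eq hsum) (key.trans (le_of_eq hat.symm))
  linarith

/-- With `G(λ) = (1/(2π²))[(√(λ−1)/λ)(π/2)coth(π√(λ−1)) − (λ−1)/λ² + 1/(4λ)]`
(the diagonal Green's function of `(−Δ)² − λΔ` on `𝕊³`), for all `D ≥ √3`,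
`2D·G(D) ≤ (1/(2π))√D − 3/(4π²)`. -/
theorem sphere3_green_substitution_bound :
    ∀ D : ℝ, Real.sqrt 3 ≤ D →
      2 * D * ((1 / (2 * π ^ 2)) *
          ((Real.sqrt (D - 1) / D) * (π / 2) *
              (Real.cosh (π * Real.sqrt (D - 1)) / Real.sinh (π * Real.sqrt (D - 1))) -
            (D - 1) / D ^ 2 + 1 / (4 * D))) ≤
        (1 / (2 * π)) * Real.sqrt D - 3 / (4 * π ^ 2) := by
  intro D hD
  have hπ : (3.1415 : ℝ) < π := by have := Real.pi_gt_d6; linarith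
  have hπp : (0 : ℝ) < π := by linarith
  have h3 : (1.732 : ℝ) ≤ Real.sqrt 3 := by
    rw [show (1.732:ℝ) = Real.sqrt (1.732^2) by rw [Real.sqrt_sq]; norm_num]
    exact Real.sqrt_le_sqrt (by norm_num)
  have hD17 : (1.732 : ℝ) ≤ D := le_trans h3 hD
  have hDpos : (0:ℝ) < D := by linarith
  set t := Real.sqrt (D - 1) with htdef
  set a := Real.sqrt D with hadef
  have ht2 : t ^ 2 = D - 1 := Real.sq_sqrt (by linarith)
  have ha2 : a ^ 2 = D := Real.sq_sqrt (by linarith)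
  have htpos : 0 < t := Real.sqrt_pos.mpr (by linarith)
  have hapos : 0 < a := Real.sqrt_pos.mpr hDpos
  -- coth bound
  have hsinh : 0 < Real.sinh (π * t) := Real.sinh_pos_iff.mpr (by positivity)
  have hE : Real.exp (2 * (π * t)) - 1 ≥ (2 * (π * t)) ^ 4 / 24 :=
    exp_sub_one_ge_pow4 (by positivity)
  have hE1 : (0:ℝ) < Real.exp (2 * (π * t)) - 1 := by
    have : (0:ℝ) < (2 * (π * t)) ^ 4 / 24 := by positivity
    linarith
  have hcoth : Real.cosh (π * t) / Real.sinh (π * t)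
      = 1 + 2 / (Real.exp (2 * (π * t)) - 1) := by
    have hu : (0:ℝ) < Real.exp (π * t) := Real.exp_pos _
    have h2x : Real.exp (2 * (π * t)) = Real.exp (π * t) ^ 2 := by
      rw [two_mul, Real.exp_add, sq]
    have hgt : 1 < Real.exp (π * t) := by
      have := Real.add_one_le_exp (π * t)
      have hpt : (0:ℝ) < π * t := by positivity
      linarith
    have hinv : (Real.exp (π * t))⁻¹ < 1 := by
      rw [inv_lt_one_iff₀]; right; exact hgt
    have hne1 : Real.exp (π * t) ^ 2 - 1 ≠ 0 := by nlinarith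
    have hne2 : Real.exp (π * t) - (Real.exp (π * t))⁻¹ ≠ 0 := by
      have : (Real.exp (π * t))⁻¹ < Real.exp (π * t) := lt_trans hinv hgt
      intro h; nlinarith
    rw [Real.cosh_eq, Real.sinh_eq, Real.exp_neg, h2x]
    have hv : (-1 + Real.exp (π * t) ^ 2) ≠ 0 := by
      intro h; apply hne1; linarith
    field_simp [hv]
    ring
  have hcoth_le : Real.cosh (π * t) / Real.sinh (π * t) ≤ 1 + 48 / (2 * (π * t)) ^ 4 := by
    rw [hcoth]
    have : 2 / (Real.exp (2 * (π * t)) - 1) ≤ 2 / ((2 * (π * t)) ^ 4 / 24) := by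
      apply div_le_div_of_nonneg_left (by norm_num) (by positivity) hE
    have h2 : 2 / ((2 * (π * t)) ^ 4 / 24) = 48 / (2 * (π * t)) ^ 4 := by
      field_simp; ring
    linarith [h2 ▸ this]
  -- main scalar inequality
  have hcore : t + 3 / (π ^ 4 * t ^ 3) + 2 / (π * a ^ 2) ≤ a :=
    core_ineq htpos hapos (by rw [ha2, ht2]; ring) (by rw [ht2]; linarith)
  have hmain : t * (Real.cosh (π * t) / Real.sinh (π * t)) + 2 / (π * D) ≤ a := by
    have h1 : t * (Real.cosh (π * t) / Real.sinh (π * t)) ≤ t * (1 + 48 / (2 * (π * t)) ^ 4) :=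
      mul_le_mul_of_nonneg_left hcoth_le (le_of_lt htpos)
    have h2 : t * (1 + 48 / (2 * (π * t)) ^ 4) = t + 3 / (π ^ 4 * t ^ 3) := by
      field_simp; ring
    rw [← ha2]
    calc t * (Real.cosh (π * t) / Real.sinh (π * t)) + 2 / (π * a ^ 2)
        ≤ (t + 3 / (π ^ 4 * t ^ 3)) + 2 / (π * a ^ 2) := by rw [← h2]; linarith
      _ ≤ a := by linarith
  -- algebra: rewrite goal
  set C := Real.cosh (π * t) / Real.sinh (π * t) with hCdef
  have hCpos : 0 < C := div_pos (Real.cosh_pos _) hsinh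
  have expand : 2 * D * ((1 / (2 * π ^ 2)) *
      ((t / D) * (π / 2) * C - (D - 1) / D ^ 2 + 1 / (4 * D)))
      = t * C / (2 * π) - (D - 1) / (π ^ 2 * D) + 1 / (4 * π ^ 2) := by
    field_simp
  rw [expand]
  have hsplit : (D - 1) / (π ^ 2 * D) = 1 / π ^ 2 - 1 / (π ^ 2 * D) := by
    field_simp
  have hdiv : t * C / (2 * π) + 1 / (π ^ 2 * D) ≤ a / (2 * π) := by
    have hdd : (t * C + 2 / (π * D)) / (2 * π) ≤ a / (2 * π) := by gcongr
    have heq : (t * C + 2 / (π * D)) / (2 * π)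
        = t * C / (2 * π) + 1 / (π ^ 2 * D) := by field_simp
    calc t * C / (2 * π) + 1 / (π ^ 2 * D) = (t * C + 2 / (π * D)) / (2 * π) := heq.symm
      _ ≤ a / (2 * π) := hdd
  have hfin : 1 / (2 * π) * a = a / (2 * π) := by ring
  rw [hsplit, hfin]
  have : 3 / (4 * π ^ 2) = 1 / π ^ 2 - 1 / (4 * π ^ 2) := by ring
  linarith
end
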